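/- Let k ≥ 1, m ≥ 1 and n ≥ 1 be integers and let C be a linear code of length n over R_{k,m} whose projection μ(C) is not the zero code. Let d = min{w_L(c) : c ∈ C, c ≠ 0} be the minimum Lee weight of C and let d' = min{w_H(b) : b ∈ μ(C), b ≠ 0} be the minimum Hamming weight of μ(C). Then d ≤ 2·m·d'. -/

import Mathlib

open MvPolynomial

set_option synthInstance.maxHeartbeats 1000000
set_option maxHeartbeats 1000000

/-- The ring `R_{k,m} = F_2[u,v]/⟨u^k, v^m⟩`. -/
noncomputable abbrev Rkm (k m : ℕ) : Type :=
  MvPolynomial (Fin 2) (ZMod 2) ⧸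
    (Ideal.span {(X 0 : MvPolynomial (Fin 2) (ZMod 2)) ^ k, (X 1 : MvPolynomial (Fin 2) (ZMod 2)) ^ m})

/-- `u`, the image of `X 0` in `R_{k,m}`. -/
noncomputable def Rkm.u (k m : ℕ) : Rkm k m := Ideal.Quotient.mk _ (X 0)

/-- `v`, the image of `X 1` in `R_{k,m}`. -/
noncomputable def Rkm.v (k m : ℕ) : Rkm k m := Ideal.Quotient.mk _ (X 1)

/-- The `t`-th Gray interval (0-indexed): `I_{2s+1} = {s,…,k-1-s}` and
`I_{2s+2} = {s+1,…,k-1-s}`, i.e. `I_{t+1} = {⌈(t+1)/2⌉,…,k-1-⌊t/2⌋}` for `t = 0,…,k-1`. -/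
def grayInterval (k : ℕ) (t : Fin k) : Finset (Fin k) :=
  Finset.univ.filter fun i : Fin k => ((t : ℕ) + 1) / 2 ≤ (i : ℕ) ∧ (i : ℕ) ≤ k - 1 - (t : ℕ) / 2

set_option maxHeartbeats 10000000
set_option synthInstance.maxHeartbeats 10000000

/-- If `C` is a linear code of length `n` over `R_{k,m}` whose binary projection `μ(C)` is
not the zero code, then the minimum Lee weight `d` of `C` and the minimum Hamming weight
`d'` of `μ(C)` satisfy `d ≤ 2 m d'`. -/
theorem Rkm_min_lee_le (k m n : ℕ) (hk : 1 ≤ k) (hm : 1 ≤ m) (hn : 1 ≤ n)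
    (B : Module.Basis (Fin k × Fin m) (ZMod 2) (Rkm k m))
    (hB : ∀ p : Fin k × Fin m, B p = Rkm.u k m ^ (p.1 : ℕ) * Rkm.v k m ^ (p.2 : ℕ))
    (φ : (Fin n → Rkm k m) → (Fin m × Fin k × Fin n → ZMod 2))
    (hφ : ∀ a : Fin n → Rkm k m, ∀ q : Fin m × Fin k × Fin n,
      φ a q = ∑ j ∈ grayInterval m q.1, ∑ i ∈ grayInterval k q.2.1, B.repr (a q.2.2) (i, j))
    (wL : (Fin n → Rkm k m) → ℕ) (hwL : ∀ c : Fin n → Rkm k m, wL c = hammingNorm (φ c))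
    (μ : Rkm k m →+* ZMod 2) (hμu : μ (Rkm.u k m) = 0) (hμv : μ (Rkm.v k m) = 0)
    (C : Submodule (Rkm k m) (Fin n → Rkm k m))
    (hproj : ∃ a ∈ C, (fun i => μ (a i)) ≠ (0 : Fin n → ZMod 2)) :
    sInf {w : ℕ | ∃ c ∈ C, c ≠ 0 ∧ wL c = w} ≤
      2 * m * sInf {w : ℕ | ∃ a ∈ C, (fun i => μ (a i)) ≠ (0 : Fin n → ZMod 2) ∧
        hammingNorm (fun i => μ (a i)) = w} := by
  -- basic nilpotency facts
  have hu : Rkm.u k m ^ k = 0 := by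
    rw [Rkm.u, ← map_pow]
    exact Ideal.Quotient.eq_zero_iff_mem.mpr (Ideal.subset_span (by simp))
  have hv : Rkm.v k m ^ m = 0 := by
    rw [Rkm.v, ← map_pow]
    exact Ideal.Quotient.eq_zero_iff_mem.mpr (Ideal.subset_span (by simp))
  have hu' : ∀ t, k ≤ t → Rkm.u k m ^ t = 0 := by
    intro t ht; rw [show t = k + (t - k) by omega, pow_add, hu, zero_mul]
  have hv' : ∀ t, m ≤ t → Rkm.v k m ^ t = 0 := by
    intro t ht; rw [show t = m + (t - m) by omega, pow_add, hv, zero_mul]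
  have halg : ∀ r : ZMod 2, μ (algebraMap (ZMod 2) (Rkm k m) r) = r := fun r =>
    RingHom.congr_fun (RingHom.ext_zmod (μ.comp (algebraMap (ZMod 2) (Rkm k m))) (RingHom.id (ZMod 2))) r
  have hsm : ∀ (r : ZMod 2) (y : Rkm k m), μ (r • y) = r * μ y := by
    intro r y
    rcases (by decide : ∀ r : ZMod 2, r = 0 ∨ r = 1) r with rfl | rfl <;> simp
  -- special indices
  set K : Fin k := ⟨k - 1, by omega⟩ with hK
  set M : Fin m := ⟨m - 1, by omega⟩ with hM
  set z : Fin k × Fin m := (⟨0, by omega⟩, ⟨0, by omega⟩) with hz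
  set P : Fin k × Fin m := (K, M) with hP
  set w : Rkm k m := Rkm.u k m ^ (k - 1) * Rkm.v k m ^ (m - 1) with hw
  -- w * x = (coefficient of x at z) • B P
  have key : ∀ x : Rkm k m, w * x = (B.repr x z) • B P := by
    intro x
    conv_lhs => rw [← Module.Basis.sum_repr B x]
    rw [Finset.mul_sum]
    rw [Finset.sum_eq_single z]
    · rw [mul_smul_comm, hB z, hB P]
      simp only [hz, hP, hK, hM]
      norm_num
      rw [hw]
    · intro p _ hp
      rw [mul_smul_comm, hB p, hw]
      have h0 : ¬((p.1 : ℕ) = 0 ∧ (p.2 : ℕ) = 0) := by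
        intro ⟨h1, h2⟩
        exact hp (Prod.ext (Fin.ext (by simpa using h1)) (Fin.ext (by simpa using h2)))
      have : Rkm.u k m ^ (k - 1) * Rkm.v k m ^ (m - 1) *
          (Rkm.u k m ^ (p.1 : ℕ) * Rkm.v k m ^ (p.2 : ℕ)) =
          Rkm.u k m ^ (k - 1 + (p.1 : ℕ)) * Rkm.v k m ^ (m - 1 + (p.2 : ℕ)) := by
        rw [pow_add, pow_add]; ring
      rw [this]
      rcases Nat.eq_zero_or_pos (p.1 : ℕ) with h1 | h1
      · have h2 : 1 ≤ (p.2 : ℕ) := by omega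
        rw [hv' _ (by omega), mul_zero, smul_zero]
      · rw [hu' _ (by omega), zero_mul, smul_zero]
    · intro h; exact absurd (Finset.mem_univ z) h
  -- μ x = coefficient at z
  have hμrepr : ∀ x : Rkm k m, μ x = B.repr x z := by
    intro x
    conv_lhs => rw [← Module.Basis.sum_repr B x]
    rw [map_sum]
    rw [Finset.sum_eq_single z]
    · rw [hsm, hB z]; simp [hz]
    · intro p _ hp
      rw [hsm, hB p, map_mul, map_pow, map_pow, hμu, hμv]
      have h0 : ¬((p.1 : ℕ) = 0 ∧ (p.2 : ℕ) = 0) := by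
        intro ⟨h1, h2⟩
        exact hp (Prod.ext (Fin.ext (by simpa using h1)) (Fin.ext (by simpa using h2)))
      rcases Nat.eq_zero_or_pos (p.1 : ℕ) with h1 | h1
      · rw [zero_pow (by omega : (p.2 : ℕ) ≠ 0), mul_zero, mul_zero]
      · rw [zero_pow (by omega : (p.1 : ℕ) ≠ 0), zero_mul, mul_zero]
    · intro h; exact absurd (Finset.mem_univ z) h
  -- pick the minimizing word a
  have hne : {w : ℕ | ∃ a ∈ C, (fun i => μ (a i)) ≠ (0 : Fin n → ZMod 2) ∧
      hammingNorm (fun i => μ (a i)) = w}.Nonempty := by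
    obtain ⟨a, haC, ha0⟩ := hproj
    exact ⟨_, a, haC, ha0, rfl⟩
  obtain ⟨a, haC, ha0, had⟩ := Nat.sInf_mem hne
  set d' := sInf {w : ℕ | ∃ a ∈ C, (fun i => μ (a i)) ≠ (0 : Fin n → ZMod 2) ∧
      hammingNorm (fun i => μ (a i)) = w} with hd'
  -- the codeword c
  have hCsm : (w • a) ∈ C := C.smul_mem w haC
  obtain ⟨c, hc⟩ : ∃ c : Fin n → Rkm k m, c = w • a := ⟨_, rfl⟩
  have hcC : c ∈ C := hc ▸ hCsm
  have hci : ∀ i, c i = w * a i := fun i => by rw [hc, Pi.smul_apply, smul_eq_mul]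
  have hcrepr : ∀ i q, B.repr (c i) q = if q = P then μ (a i) else 0 := by
    intro i q
    rw [hci, key, map_smul, Module.Basis.repr_self]
    rw [hμrepr]
    rw [Finsupp.smul_apply, Finsupp.single_apply, smul_eq_mul]
    rcases eq_or_ne q P with h | h
    · rw [if_pos h, if_pos h.symm, mul_one]
    · rw [if_neg h, if_neg (Ne.symm h), mul_zero]
  -- exists i with μ (a i) ≠ 0
  obtain ⟨i0, hi0⟩ : ∃ i, μ (a i) ≠ 0 := by
    by_contra h
    push_neg at h
    exact ha0 (funext fun i => h i)
  -- c ≠ 0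
  have hc0 : c ≠ 0 := by
    intro h
    have := hcrepr i0 P
    rw [h] at this
    simp at this
    exact hi0 this.symm
  -- support analysis of φ c
  have hsupp : ∀ q : Fin m × Fin k × Fin n, φ c q ≠ 0 →
      μ (a q.2.2) ≠ 0 ∧ (q.2.1 : ℕ) ≤ 1 := by
    intro q hq
    rw [hφ] at hq
    by_contra hcon
    apply hq
    apply Finset.sum_eq_zero
    intro j hj
    apply Finset.sum_eq_zero
    intro i hi
    rw [hcrepr]
    rcases eq_or_ne ((i, j) : Fin k × Fin m) P with h | h
    · rw [if_pos h]
      rcases not_and_or.mp hcon with h1 | h1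
      · exact not_not.mp h1
      · exfalso
        have hiK : (i : ℕ) = k - 1 := by
          have h1 : i = K := congrArg Prod.fst h
          rw [h1]
        rw [grayInterval, Finset.mem_filter] at hi
        obtain ⟨-, hi1, hi2⟩ := hi
        have ht : (q.2.1 : ℕ) < k := q.2.1.isLt
        clear * - hi1 hi2 hiK ht h1
        omega
    · rw [if_neg h]
  -- counting
  have hwc : wL c ≤ 2 * m * d' := by
    rw [hwL]
    have hcard : hammingNorm (φ c) =
        (Finset.univ.filter fun q : Fin m × Fin k × Fin n => φ c q ≠ 0).card := rfl
    rw [hcard]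
    have hsub : (Finset.univ.filter fun q : Fin m × Fin k × Fin n => φ c q ≠ 0) ⊆
        Finset.univ ×ˢ ((Finset.univ.filter fun t : Fin k => (t : ℕ) ≤ 1) ×ˢ
          (Finset.univ.filter fun i : Fin n => μ (a i) ≠ 0)) := by
      intro q hq
      rw [Finset.mem_filter] at hq
      obtain ⟨h1, h2⟩ := hsupp q hq.2
      simp [Finset.mem_product, h1, h2]
    calc (Finset.univ.filter fun q : Fin m × Fin k × Fin n => φ c q ≠ 0).card
        ≤ _ := Finset.card_le_card hsub
      _ = m * ((Finset.univ.filter fun t : Fin k => (t : ℕ) ≤ 1).card *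
            (Finset.univ.filter fun i : Fin n => μ (a i) ≠ 0).card) := by
          rw [Finset.card_product, Finset.card_product, Finset.card_univ, Fintype.card_fin]
      _ ≤ m * (2 * d') := by
          apply Nat.mul_le_mul_left
          apply Nat.mul_le_mul
          · have : (Finset.univ.filter fun t : Fin k => (t : ℕ) ≤ 1).card ≤
                (Finset.range 2).card := by
              apply Finset.card_le_card_of_injOn Fin.val
              · intro t ht
                rw [Finset.mem_coe, Finset.mem_filter] at ht
                simp [Nat.lt_succ_iff, ht.2]
              · intro s _ t _ h
                exact Fin.ext h
            simpa using this
          · have hcard2 : hammingNorm (fun i => μ (a i)) =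
                (Finset.univ.filter fun i : Fin n => μ (a i) ≠ 0).card := rfl
            rw [← had, hcard2]
      _ = 2 * m * d' := by ring
  -- conclude
  have hmem : wL c ∈ {w : ℕ | ∃ c ∈ C, c ≠ 0 ∧ wL c = w} := ⟨c, hcC, hc0, rfl⟩
  exact le_trans (Nat.sInf_le hmem) hwc
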